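/- Converse direction of the characterization of regular distributions: if Δ ≥ 0 is self-adjoint with orthonormal eigenbasis (φ_n), eigenvalues λ_n ↗ ∞ growing at least polynomially, and u = ∑ a_n φ_n ∈ H with (a_n) not rapidly decreasing, then the map Θ_u : T ↦ Tu fails to be regular: there exists r ∈ ℤ such that for every b ∈ ℕ there is n ≥ b+|r| for which no constant C satisfies ‖Θ_u(T)‖_n ≤ C‖T‖_{n+r} for all finite-rank diagonal T = ∑ k_n φ_n⊗φ_n. -/

import Mathlib

open Filter

/-- A real sequence is rapidly decreasing if `n^m * k n → 0` for every `m`. -/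
def RapidlyDecreasing (k : ℕ → ℝ) : Prop :=
  ∀ m : ℕ, Tendsto (fun n : ℕ => (n : ℝ) ^ m * k n) atTop (nhds 0)

/-- The index set `{(p,q) : p + q ≤ n, p ≥ -n, q ≥ -n}` of the grading of
smoothing operators. -/
noncomputable def smIdx (n : ℕ) : Finset (ℤ × ℤ) :=
  ((Finset.Icc (-(n : ℤ)) (2 * n)) ×ˢ (Finset.Icc (-(n : ℤ)) (2 * n))).filter
    (fun pq => pq.1 + pq.2 ≤ (n : ℤ))

/-- For a finite-rank diagonal operator `T = ∑ k_n φ_n ⊗ φ_n`, the `n`-th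
Sobolev norm of `Θ_u(T) = T u` (`u = ∑ a_n φ_n`):
`‖(1+Δ)^{n/2} T u‖ = (∑ |a_i k_i|² (1+λ_i)^n)^{1/2}`. -/
noncomputable def thetaNorm (a lam : ℕ → ℝ) (k : ℕ → ℝ) (n : ℕ) : ℝ :=
  Real.sqrt (∑' i, (a i * k i) ^ 2 * (1 + lam i) ^ (n : ℤ))

/-- The grading norm `‖T‖_m = ∑_{p+q≤m, p,q≥-m} ‖(1+Δ)^{p/2}T(1+Δ)^{q/2}‖_HS`
of the diagonal operator `T = ∑ k_n φ_n ⊗ φ_n`, where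
`‖(1+Δ)^{p/2}T(1+Δ)^{q/2}‖²_HS = ∑ |k_i|²(1+λ_i)^{p+q}`. -/
noncomputable def diagGradeNorm (lam : ℕ → ℝ) (k : ℕ → ℝ) (m : ℕ) : ℝ :=
  ∑ pq ∈ smIdx m, Real.sqrt (∑' i, (k i) ^ 2 * (1 + lam i) ^ (pq.1 + pq.2))

/-- converse direction of the characterization of regular
distributions: if `Δ ≥ 0` has orthonormal eigenbasis `(φ_n)`, eigenvalues
`λ_n` nondecreasing, tending to `∞` with at least polynomial growth, and
`u = ∑ a_n φ_n` with `(a_n) ∈ ℓ²` NOT rapidly decreasing, then `Θ_u : T ↦ Tu`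
fails to be regular: there is `r ∈ ℤ` such that for every `b ∈ ℕ` there is
`n ≥ b + |r|` for which no constant `C > 0` satisfies
`‖Θ_u(T)‖_n ≤ C ‖T‖_{n+r}` for all finite-rank diagonal `T = ∑ k_n φ_n⊗φ_n`. -/
theorem theta_u_not_regular_of_not_rapidly_decreasing
    (a lam : ℕ → ℝ)
    (ha : Summable (fun n => (a n) ^ 2))
    (hnotrd : ¬ RapidlyDecreasing a)
    (hlam_mono : Monotone lam)
    (hlam_nonneg : ∀ n, 0 ≤ lam n)
    (hlam_top : Tendsto lam atTop atTop)
    (hgrowth : ∃ (c d : ℝ), 0 < c ∧ 0 < d ∧ ∃ N : ℕ, ∀ n ≥ N,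
      c * (n : ℝ) ^ ((1 : ℝ) / d) ≤ lam n) :
    ∃ r : ℤ, ∀ b : ℕ, ∃ n : ℕ, (b : ℤ) + |r| ≤ (n : ℤ) ∧
      ¬ ∃ C : ℝ, 0 < C ∧ ∀ k : ℕ → ℝ, (Function.support k).Finite →
        thetaNorm a lam k n ≤ C * diagGradeNorm lam k ((n : ℤ) + r).toNat := by

  classical
  rw [RapidlyDecreasing] at hnotrd
  push_neg at hnotrd
  obtain ⟨m₀, hm₀⟩ := hnotrd
  obtain ⟨c, d, hc, hd, N₀, hgr⟩ := hgrowth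
  set K : ℕ := ⌈d * (m₀ + 1)⌉₊ with hKdef
  have hKge : d * (m₀ + 1) ≤ (K : ℝ) := Nat.le_ceil _
  refine ⟨-(2 * (K : ℤ)), fun b => ⟨b + 2 * K, ?_, ?_⟩⟩
  · simp only [abs_neg]
    rw [abs_of_nonneg (by positivity)]
    push_cast; omega
  rintro ⟨C, hC, hall⟩
  set n : ℕ := b + 2 * K with hn
  have hM : (((n : ℕ) : ℤ) + -(2 * (K : ℤ))).toNat = b := by
    simp only [hn]; push_cast; omega
  rw [hM] at hall
  set A : ℝ := ((smIdx b).card : ℝ) with hA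
  have hA0 : 0 ≤ A := by positivity
  -- Key estimate: testing on k = δ_m
  have key : ∀ m : ℕ, |a m| * (1 + lam m) ^ K ≤ C * A := by
    intro m
    set y : ℝ := 1 + lam m with hy
    have hy1 : 1 ≤ y := by simp [hy]; exact hlam_nonneg m
    have hy0 : 0 < y := lt_of_lt_of_le one_pos hy1
    set k : ℕ → ℝ := fun i => if i = m then (1 : ℝ) else 0 with hk
    have hsupp : (Function.support k).Finite := by
      apply Set.Finite.subset (Set.finite_singleton m)
      intro i hi
      simp only [Function.mem_support, hk] at hi
      simp only [Set.mem_singleton_iff]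
      by_contra h
      exact hi (if_neg h)
    have h1 := hall k hsupp
    -- compute thetaNorm
    have ht : thetaNorm a lam k n = Real.sqrt (a m ^ 2 * y ^ n) := by
      unfold thetaNorm
      rw [tsum_eq_single m (fun i hi => by simp [hk, hi])]
      simp [hk, zpow_natCast, hy]
    -- bound diagGradeNorm
    have hdg : diagGradeNorm lam k b ≤ A * Real.sqrt (y ^ b) := by
      unfold diagGradeNorm
      have := Finset.sum_le_card_nsmul (smIdx b)
        (fun pq => Real.sqrt (∑' i, (k i) ^ 2 * (1 + lam i) ^ (pq.1 + pq.2)))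
        (Real.sqrt (y ^ b)) ?_
      · simpa [nsmul_eq_mul, hA] using this
      · intro pq hpq
        have hle : pq.1 + pq.2 ≤ (b : ℤ) := by
          simp only [smIdx, Finset.mem_filter] at hpq
          exact hpq.2
        rw [tsum_eq_single m (fun i hi => by simp [hk, hi])]
        have : (k m) ^ 2 * (1 + lam m) ^ (pq.1 + pq.2) = y ^ (pq.1 + pq.2) := by
          simp [hk, hy]
        rw [this]
        apply Real.sqrt_le_sqrt
        calc y ^ (pq.1 + pq.2) ≤ y ^ (b : ℤ) := zpow_le_zpow_right₀ hy1 hle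
          _ = y ^ b := zpow_natCast y b
    have h2 : Real.sqrt (a m ^ 2 * y ^ n) ≤ C * A * Real.sqrt (y ^ b) := by
      rw [← ht]
      calc thetaNorm a lam k n ≤ C * diagGradeNorm lam k b := h1
        _ ≤ C * (A * Real.sqrt (y ^ b)) := by
            exact mul_le_mul_of_nonneg_left hdg hC.le
        _ = C * A * Real.sqrt (y ^ b) := by ring
    -- square both sides
    have h3 : a m ^ 2 * y ^ n ≤ (C * A) ^ 2 * y ^ b := by
      have hX : (0 : ℝ) ≤ a m ^ 2 * y ^ n := by positivity
      have := pow_le_pow_left₀ (Real.sqrt_nonneg _) h2 2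
      rwa [Real.sq_sqrt hX, mul_pow, Real.sq_sqrt (by positivity : (0:ℝ) ≤ y ^ b)] at this
    -- divide by y ^ b
    have h4 : (|a m| * y ^ K) ^ 2 ≤ (C * A) ^ 2 := by
      have hyb : (0 : ℝ) < y ^ b := pow_pos hy0 b
      refine le_of_mul_le_mul_right ?_ hyb
      calc (|a m| * y ^ K) ^ 2 * y ^ b = |a m| ^ 2 * y ^ (b + 2 * K) := by ring
        _ = a m ^ 2 * y ^ n := by rw [sq_abs, hn]
        _ ≤ (C * A) ^ 2 * y ^ b := h3
    calc |a m| * y ^ K = Real.sqrt ((|a m| * y ^ K) ^ 2) :=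
          (Real.sqrt_sq (by positivity)).symm
      _ ≤ Real.sqrt ((C * A) ^ 2) := Real.sqrt_le_sqrt h4
      _ = C * A := Real.sqrt_sq (by positivity)
  -- derive rapid decay at level m₀, contradiction
  apply hm₀
  have hDnn : (0 : ℝ) ≤ C * A / c ^ K := by positivity
  apply squeeze_zero_norm' (a := fun m : ℕ => (C * A / c ^ K) / m)
  · filter_upwards [eventually_ge_atTop (max N₀ 1)] with m hm
    have hmN : N₀ ≤ m := le_trans (le_max_left _ _) hm
    have hm1 : 1 ≤ m := le_trans (le_max_right _ _) hm
    have hm1R : (1 : ℝ) ≤ (m : ℝ) := by exact_mod_cast hm1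
    have hm0R : (0 : ℝ) < (m : ℝ) := lt_of_lt_of_le one_pos hm1R
    set y : ℝ := 1 + lam m with hy
    have hy1 : 1 ≤ y := by simp [hy]; exact hlam_nonneg m
    -- lower bound on y ^ K
    have hcm : c * (m : ℝ) ^ ((1:ℝ)/d) ≤ y := le_trans (hgr m hmN) (by simp [hy])
    have hcm0 : (0 : ℝ) ≤ c * (m : ℝ) ^ ((1:ℝ)/d) := by positivity
    have hyK : c ^ K * (m : ℝ) ^ (m₀ + 1) ≤ y ^ K := by
      have h5 : (c * (m : ℝ) ^ ((1:ℝ)/d)) ^ K ≤ y ^ K := pow_le_pow_left₀ hcm0 hcm K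
      have h6 : (c * (m : ℝ) ^ ((1:ℝ)/d)) ^ K = c ^ K * (m : ℝ) ^ (((1:ℝ)/d) * K) := by
        rw [mul_pow, ← Real.rpow_natCast ((m:ℝ) ^ ((1:ℝ)/d)) K, ← Real.rpow_mul (by positivity)]
      have h7 : ((m : ℝ)) ^ ((m₀ + 1 : ℕ) : ℝ) ≤ (m : ℝ) ^ (((1:ℝ)/d) * K) := by
        apply Real.rpow_le_rpow_of_exponent_le hm1R
        rw [div_mul_eq_mul_div, one_mul, le_div_iff₀ hd]
        push_cast
        calc ((m₀ : ℝ) + 1) * d = d * (m₀ + 1) := by ring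
          _ ≤ K := hKge
      have h8 : ((m : ℝ)) ^ ((m₀ + 1 : ℕ) : ℝ) = (m : ℝ) ^ (m₀ + 1) :=
        Real.rpow_natCast _ _
      calc c ^ K * (m : ℝ) ^ (m₀ + 1) = c ^ K * ((m:ℝ) ^ ((m₀ + 1 : ℕ) : ℝ)) := by rw [h8]
        _ ≤ c ^ K * ((m:ℝ) ^ (((1:ℝ)/d) * K)) := by
            exact mul_le_mul_of_nonneg_left h7 (by positivity)
        _ = (c * (m : ℝ) ^ ((1:ℝ)/d)) ^ K := h6.symm
        _ ≤ y ^ K := h5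
    -- combine
    have h9 : |a m| * (c ^ K * (m : ℝ) ^ (m₀ + 1)) ≤ C * A :=
      le_trans (mul_le_mul_of_nonneg_left hyK (abs_nonneg _)) (key m)
    rw [Real.norm_eq_abs, abs_mul, abs_pow, Nat.abs_cast]
    rw [div_div, le_div_iff₀ (by positivity)]
    calc (m : ℝ) ^ m₀ * |a m| * (c ^ K * (m : ℝ)) = |a m| * (c ^ K * (m : ℝ) ^ (m₀ + 1)) := by
          ring
      _ ≤ C * A := h9
  · exact tendsto_const_div_atTop_nhds_zero_nat _
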